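/- For every finite clique C in the contact graph of a CAT(0) cube complex X (i.e. a finite set of hyperplanes whose carriers pairwise intersect), there exists a vertex v of X such that every hyperplane in C is adjacent to v (i.e. crosses an edge of X incident to v). -/

import Mathlib

open SimpleGraph

variable {V : Type*}

/-- A median graph: combinatorial model of (the 1-skeleton of) a CAT(0) cube complex. -/
def IsMedianGraph (G : SimpleGraph V) : Prop :=
  G.Connected ∧ ∀ x y z : V, ∃! m : V,
    G.dist x m + G.dist m y = G.dist x y ∧
    G.dist x m + G.dist m z = G.dist x z ∧
    G.dist y m + G.dist m z = G.dist y z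

/-- Djoković–Winkler relation on oriented edges of a median graph; hyperplanes are its classes. -/
def Theta (G : SimpleGraph V) (e f : V × V) : Prop :=
  G.dist e.1 f.1 + G.dist e.2 f.2 ≠ G.dist e.1 f.2 + G.dist e.2 f.1

/-- A hyperplane, identified with the set of (oriented) edges crossing it. -/
def IsHyperplane (G : SimpleGraph V) (h : Set (V × V)) : Prop :=
  ∃ e : V × V, G.Adj e.1 e.2 ∧ h = {f | G.Adj f.1 f.2 ∧ Theta G e f}

/-- The hyperplane `h` is adjacent to the vertex `v` (i.e. `v` lies in the carrier of `h`). -/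
def AdjTo (G : SimpleGraph V) (h : Set (V × V)) (v : V) : Prop :=
  ∃ e ∈ h, e.1 = v ∨ e.2 = v

/-- `Wv G v`: the set of hyperplanes adjacent to `v`. -/
def Wv (G : SimpleGraph V) (v : V) : Set (Set (V × V)) :=
  {h | IsHyperplane G h ∧ AdjTo G h v}

/-- Two hyperplanes are in contact if their carriers share a vertex. -/
def Contact (G : SimpleGraph V) (h h' : Set (V × V)) : Prop :=
  ∃ v : V, AdjTo G h v ∧ AdjTo G h' v

/-- Two hyperplanes are transverse if they cross a common square. -/
def Transverse (G : SimpleGraph V) (h h' : Set (V × V)) : Prop :=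
  ∃ a b c d : V, (a, b) ∈ h ∧ (c, d) ∈ h ∧ (a, c) ∈ h' ∧ (b, d) ∈ h' ∧
    G.Adj a b ∧ G.Adj c d ∧ G.Adj a c ∧ G.Adj b d

/-- A clique in the contact graph: a set of hyperplanes whose carriers pairwise intersect. -/
def IsContactClique (G : SimpleGraph V) (C : Set (Set (V × V))) : Prop :=
  (∀ h ∈ C, IsHyperplane G h) ∧ ∀ h ∈ C, ∀ h' ∈ C, h ≠ h' → Contact G h h'

/-- A maximal clique in the contact graph. -/
def IsMaxContactClique (G : SimpleGraph V) (C : Set (Set (V × V))) : Prop :=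
  IsContactClique G C ∧ ∀ C', IsContactClique G C' → C ⊆ C' → C' = C

/-- The link of `v` is a cone, i.e. `v` is an extremal vertex. -/
def LinkIsCone (G : SimpleGraph V) (v : V) : Prop :=
  ∃ h ∈ Wv G v, ∀ h' ∈ Wv G v, h' ≠ h → Transverse G h h'

/-- Uniform local finiteness. -/
def UnifLocFinite (G : SimpleGraph V) : Prop :=
  ∃ N : ℕ, ∀ v : V, (G.neighborSet v).Finite ∧ (G.neighborSet v).ncard ≤ N

abbrev Hyp (G : SimpleGraph V) := {h : Set (V × V) // IsHyperplane G h}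

/-- The contact graph `𝒞(X)`. -/
def contactGraph (G : SimpleGraph V) : SimpleGraph (Hyp G) where
  Adj h h' := h ≠ h' ∧ Contact G h.1 h'.1
  symm := by
    refine ⟨?_⟩
    rintro h h' ⟨hne, v, hv, hv'⟩
    exact ⟨hne.symm, v, hv', hv⟩
  loopless := by refine ⟨?_⟩; rintro h ⟨hne, -⟩; exact hne rfl

/-- `Ical G w` = I(w): the hyperplanes whose carrier contains the carrier of `w`,
i.e. the intersection of the sets `Wv G v` over all vertices `v` adjacent to `w`. -/
def Ical (G : SimpleGraph V) (w : Set (V × V)) : Set (Set (V × V)) :=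
  {u | IsHyperplane G u ∧ ∀ v : V, AdjTo G w v → AdjTo G u v}

/-- `Ical0 G w` = I⁰(w): the hyperplanes with the same carrier as `w`. -/
def Ical0 (G : SimpleGraph V) (w : Set (V × V)) : Set (Set (V × V)) :=
  {u | u ∈ Ical G w ∧ w ∈ Ical G u}

/-- The action of a cubical automorphism on sets of edges (e.g. hyperplanes). -/
def hmap (G : SimpleGraph V) (φ : G ≃g G) (h : Set (V × V)) : Set (V × V) :=
  (fun e : V × V => (φ e.1, φ e.2)) '' h

/-- `π` is the vertex permutation induced by the contact-graph automorphism `ψ` via the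
correspondence between vertices and maximal cliques (`ρ(ψ) = π`). -/
def InducesPerm (G : SimpleGraph V) (ψ : contactGraph G ≃g contactGraph G)
    (π : Equiv.Perm V) : Prop :=
  ∀ (v : V) (h : Hyp G), h.1 ∈ Wv G v ↔ (ψ h).1 ∈ Wv G (π v)

/-- The hyperplane `u` is adjacent, inside the cube complex structure of a hyperplane `w`,
to the vertex of `w` given by the edge `e ∈ w`: `u` crosses a square containing `e`. -/
def HypAdjEdge (G : SimpleGraph V) (u : Set (V × V)) (e : V × V) : Prop :=
  ∃ c d : V, (e.1, c) ∈ u ∧ (e.2, d) ∈ u ∧ G.Adj c d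

/-- The link, in the cube complex structure of hyperplane `w`, of the vertex given by
`e ∈ w` is a cone (i.e. this vertex of `w` is extremal). -/
def HypLinkCone (G : SimpleGraph V) (w : Set (V × V)) (e : V × V) : Prop :=
  ∃ u, IsHyperplane G u ∧ u ≠ w ∧ HypAdjEdge G u e ∧
    ∀ u', IsHyperplane G u' → u' ≠ w → HypAdjEdge G u' e → u' ≠ u → Transverse G u u'

/-- No hyperplane of `X` has an extremal vertex. -/
def NoHypExtremalVertex (G : SimpleGraph V) : Prop :=
  ∀ w, IsHyperplane G w → ∀ e ∈ w, ¬ HypLinkCone G w e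

namespace CH


variable {G : SimpleGraph V}

/-- `v` is on the `a`-side of the wall dual to edge `(a,b)`. -/
def Plus (G : SimpleGraph V) (a b v : V) : Prop := G.dist v a + 1 = G.dist v b

lemma grad (hG : IsMedianGraph G) {a b : V} (hab : G.Adj a b) (x : V) :
    Plus G a b x ∨ Plus G b a x := by
  obtain ⟨m, ⟨h1, h2, h3⟩, -⟩ := hG.2 x a b
  have hab1 : G.dist a b = 1 := dist_eq_one_iff_adj.mpr hab
  rw [hab1] at h3
  have hc1 : G.dist m a = G.dist a m := SimpleGraph.dist_comm ..
  have hc2 : G.dist b a = G.dist a b := SimpleGraph.dist_comm ..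
  rcases Nat.le_one_iff_eq_zero_or_eq_one.mp (Nat.le.intro h3 : G.dist a m ≤ 1) with h | h
  · have hma : m = a := (hG.1 m a).dist_eq_zero_iff.mp (by omega)
    subst hma
    left
    unfold Plus
    omega
  · have hmb : m = b := (hG.1 m b).dist_eq_zero_iff.mp (by omega)
    subst hmb
    right
    unfold Plus
    omega

lemma plus_not_both {a b v : V} (h1 : Plus G a b v) (h2 : Plus G b a v) : False := by
  unfold Plus at *; omega

/-- step along a geodesic -/
lemma step (hconn : G.Connected) {x z : V} {n : ℕ} (h : G.dist x z = n + 1) :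
    ∃ y, G.Adj x y ∧ G.dist y z = n := by
  obtain ⟨p, hp⟩ := hconn.exists_walk_length_eq_dist x z
  cases p with
  | nil => rw [h] at hp; simp at hp
  | @cons _ y _ hadj q =>
    refine ⟨y, hadj, ?_⟩
    have h1 : G.dist y z ≤ q.length := dist_le q
    have h2 : G.dist x z ≤ G.dist x y + G.dist y z := hconn.dist_triangle
    have h3 : G.dist x y = 1 := dist_eq_one_iff_adj.mpr hadj
    simp only [Walk.length_cons] at hp
    omega

/-- quadrangle condition derived from the median axiom -/
lemma qc (hG : IsMedianGraph G) {x y u : V} {k : ℕ} (hxy : G.dist x y = 2)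
    (hux : G.dist u x = k) (huy : G.dist u y = k) :
    ∃ w, G.Adj x w ∧ G.Adj y w ∧ G.dist u w + 1 = k := by
  obtain ⟨m, ⟨h1, h2, h3⟩, -⟩ := hG.2 x y u
  have hc1 : G.dist x u = G.dist u x := SimpleGraph.dist_comm ..
  have hc2 : G.dist y u = G.dist u y := SimpleGraph.dist_comm ..
  have hc3 : G.dist u m = G.dist m u := SimpleGraph.dist_comm ..
  have hc4 : G.dist m y = G.dist y m := SimpleGraph.dist_comm ..
  have hxm : G.dist x m = 1 := by omega
  have hym : G.dist y m = 1 := by omega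
  exact ⟨m, dist_eq_one_iff_adj.mp hxm, dist_eq_one_iff_adj.mp hym, by omega⟩

/-- geodesic as a function -/
lemma geodesic_fun (hconn : G.Connected) {y w : V} {m : ℕ} (hd : G.dist y w = m) :
    ∃ g : ℕ → V, g 0 = y ∧ g m = w ∧ (∀ j, j < m → G.Adj (g j) (g (j+1))) ∧
      (∀ j, j ≤ m → G.dist y (g j) = j ∧ G.dist (g j) w = m - j) := by
  obtain ⟨p, hp⟩ := hconn.exists_walk_length_eq_dist y w
  rw [hd] at hp
  refine ⟨p.getVert, p.getVert_zero, by rw [← hp]; exact p.getVert_length, 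
    fun j hj => p.adj_getVert_succ (by omega), ?_⟩
  have hup : ∀ j, j ≤ m → G.dist y (p.getVert j) ≤ j := by
    intro j hj
    induction j with
    | zero => simp [p.getVert_zero]
    | succ i ih =>
      have h1 : G.dist y (p.getVert i) ≤ i := ih (by omega)
      have h2 : G.Adj (p.getVert i) (p.getVert (i+1)) := p.adj_getVert_succ (by omega)
      have h3 := hconn.dist_triangle (u := y) (v := p.getVert i) (w := p.getVert (i+1))
      have h4 : G.dist (p.getVert i) (p.getVert (i+1)) = 1 := dist_eq_one_iff_adj.mpr h2
      omega
  have hdn : ∀ i, i ≤ m → G.dist (p.getVert (m - i)) w ≤ i := by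
    intro i hi
    induction i with
    | zero => 
      simp only [Nat.sub_zero]
      rw [← hp]
      simp [p.getVert_length]
    | succ i ih =>
      have h1 : G.dist (p.getVert (m - i)) w ≤ i := ih (by omega)
      have h2 : G.Adj (p.getVert (m - (i+1))) (p.getVert (m - (i+1) + 1)) := 
        p.adj_getVert_succ (by omega)
      have he : m - (i+1) + 1 = m - i := by omega
      rw [he] at h2
      have h3 := hconn.dist_triangle (u := p.getVert (m - (i+1))) (v := p.getVert (m - i)) (w := w)
      have h4 : G.dist (p.getVert (m - (i+1))) (p.getVert (m-i)) = 1 := dist_eq_one_iff_adj.mpr h2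
      omega
  intro j hj
  have h1 := hup j hj
  have h2 := hdn (m - j) (by omega)
  rw [show m - (m - j) = j by omega] at h2
  have h3 := hconn.dist_triangle (u := y) (v := p.getVert j) (w := w)
  omega


/-- numerology of a crossing edge -/
lemma cross_dists (hG : IsMedianGraph G) {a b x y : V} (hab : G.Adj a b) (hxy : G.Adj x y)
    (hx : Plus G a b x) (hy : Plus G b a y) :
    G.dist x a + 1 = G.dist y a ∧ G.dist y b + 1 = G.dist x b ∧ G.dist x a = G.dist y b := by
  have h1 := grad hG hxy a
  have h2 := grad hG hxy b
  have c1 : G.dist a x = G.dist x a := SimpleGraph.dist_comm ..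
  have c2 : G.dist a y = G.dist y a := SimpleGraph.dist_comm ..
  have c3 : G.dist b x = G.dist x b := SimpleGraph.dist_comm ..
  have c4 : G.dist b y = G.dist y b := SimpleGraph.dist_comm ..
  unfold Plus at *
  omega

lemma not_adj_far (hG : IsMedianGraph G) {p u v : V} (h1 : G.dist p u + 1 ≠ G.dist p v)
    (h2 : G.dist p v + 1 ≠ G.dist p u) : ¬ G.Adj u v := by
  intro hadj
  have := grad hG hadj p
  have c1 : G.dist p u = G.dist u p := SimpleGraph.dist_comm ..
  have c2 : G.dist p v = G.dist v p := SimpleGraph.dist_comm ..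
  unfold Plus at this
  omega

/-- two distinct non-adjacent vertices with a common neighbour are at distance 2 -/
lemma dist_eq_two (hconn : G.Connected) {u v c : V} (hne : u ≠ v) (hnadj : ¬ G.Adj u v)
    (huc : G.Adj u c) (hcv : G.Adj c v) : G.dist u v = 2 := by
  have h1 : G.dist u v ≤ G.dist u c + G.dist c v := hconn.dist_triangle
  have h2 : G.dist u c = 1 := dist_eq_one_iff_adj.mpr huc
  have h3 : G.dist c v = 1 := dist_eq_one_iff_adj.mpr hcv
  have h4 : G.dist u v ≠ 0 := fun h => hne (hconn.dist_eq_zero_iff.mp h)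
  have h5 : G.dist u v ≠ 1 := fun h => hnadj (dist_eq_one_iff_adj.mp h)
  omega

/-- the shared-minus-endpoint configuration is impossible -/
lemma Q0 (hG : IsMedianGraph G) {a b x y z : V} (hab : G.Adj a b) (hxy : G.Adj x y)
    (hzy : G.Adj z y) (hx : Plus G a b x) (hy : Plus G b a y) (hz : Plus G a b z)
    (hxz : G.dist x z = 2) : False := by
  have hconn := hG.1
  obtain ⟨e1, e2, e3⟩ := cross_dists hG hab hxy hx hy
  obtain ⟨f1, f2, f3⟩ := cross_dists hG hab hzy hz hy
  unfold Plus at hx hy hz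
  have cax : G.dist a x = G.dist x a := SimpleGraph.dist_comm ..
  have caz : G.dist a z = G.dist z a := SimpleGraph.dist_comm ..
  have cay : G.dist a y = G.dist y a := SimpleGraph.dist_comm ..
  have ht : 1 ≤ G.dist y b := by
    by_contra h
    have hxa : x = a := hconn.dist_eq_zero_iff.mp (by omega)
    have hza : z = a := hconn.dist_eq_zero_iff.mp (by omega)
    rw [hxa, hza, hconn.dist_eq_zero_iff.mpr rfl] at hxz
    omega
  -- quadrangle: s below y
  obtain ⟨s, hxs, hzs, hs⟩ := qc hG (u := a) (k := G.dist y b) hxz (by omega) (by omega)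
  have cas : G.dist a s = G.dist s a := SimpleGraph.dist_comm ..
  have hsb : G.dist s b = G.dist y b := by
    have h1 := grad hG hab s
    have h2 := grad hG hxs b
    have c1 : G.dist b x = G.dist x b := SimpleGraph.dist_comm ..
    have c2 : G.dist b s = G.dist s b := SimpleGraph.dist_comm ..
    unfold Plus at h1 h2
    omega
  have hsyne : s ≠ y := fun h => by rw [h] at hs; omega
  have hsynadj : ¬ G.Adj s y := not_adj_far hG (p := a) (by omega) (by omega)
  have hsy2 : G.dist s y = 2 := dist_eq_two hconn hsyne hsynadj (G.adj_symm hxs) hxy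
  -- the median of s, y, b
  obtain ⟨mu, ⟨g1, g2, g3⟩, -⟩ := hG.2 s y b
  have cm1 : G.dist mu y = G.dist y mu := SimpleGraph.dist_comm ..
  have hsmu : G.dist s mu = 1 := by omega
  have hymu : G.dist y mu = 1 := by omega
  have hmub : G.dist mu b + 1 = G.dist y b := by omega
  have hadj_smu : G.Adj s mu := dist_eq_one_iff_adj.mp hsmu
  have hadj_ymu : G.Adj y mu := dist_eq_one_iff_adj.mp hymu
  have hamu : G.dist a mu = G.dist a s + 1 := by
    have h1 := grad hG hadj_smu a
    have h2 := grad hG hadj_ymu a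
    have c1 : G.dist mu a = G.dist a mu := SimpleGraph.dist_comm ..
    have c2 : G.dist s a = G.dist a s := SimpleGraph.dist_comm ..
    have c3 : G.dist y a = G.dist a y := SimpleGraph.dist_comm ..
    unfold Plus at h1 h2
    omega
  -- mu is a new common neighbour of s and y, distinct from x and z
  have hbx : G.dist b x = G.dist x b := SimpleGraph.dist_comm ..
  have hbz : G.dist b z = G.dist z b := SimpleGraph.dist_comm ..
  have hbmu : G.dist b mu = G.dist mu b := SimpleGraph.dist_comm ..
  have hxmune : x ≠ mu := fun h => by rw [h] at e2; omega
  have hzmune : z ≠ mu := fun h => by rw [h] at f2; omega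
  have hxmu : G.dist x mu = 2 :=
    dist_eq_two hconn hxmune (not_adj_far hG (p := a) (by omega) (by omega)) hxy hadj_ymu
  have hzmu : G.dist z mu = 2 :=
    dist_eq_two hconn hzmune (not_adj_far hG (p := a) (by omega) (by omega)) hzy hadj_ymu
  -- now s and y are both medians of (x, z, mu)
  obtain ⟨m0, -, huniq⟩ := hG.2 x z mu
  have cxs : G.dist x s = 1 := dist_eq_one_iff_adj.mpr hxs
  have csz : G.dist s z = 1 := by rw [SimpleGraph.dist_comm]; exact dist_eq_one_iff_adj.mpr hzs
  have cxy : G.dist x y = 1 := dist_eq_one_iff_adj.mpr hxy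
  have cyz : G.dist y z = 1 := by rw [SimpleGraph.dist_comm]; exact dist_eq_one_iff_adj.mpr hzy
  have czs : G.dist z s = 1 := by rw [SimpleGraph.dist_comm]; exact csz
  have czy : G.dist z y = 1 := by rw [SimpleGraph.dist_comm]; exact cyz
  have csmu : G.dist s mu = 1 := hsmu
  have hys : s = m0 := huniq s ⟨by omega, by omega, by omega⟩
  have hyy : y = m0 := huniq y ⟨by omega, by omega, by omega⟩
  exact hsyne (hys.trans hyy.symm)



/-- there is no "bad pair": two crossing edges whose plus-side endpoints are two
further apart than their minus-side endpoints. -/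
lemma Qstep (hG : IsMedianGraph G) (n : ℕ)
    (IH : ∀ m, m < n → ∀ a b x z y : V, G.Adj a b → Plus G a b x → Plus G a b z →
      G.dist x z = m → G.dist x y + G.dist y z = m → Plus G a b y) :
    ∀ k, k + 2 ≤ n → ∀ a b x y z w : V, G.Adj a b → G.Adj x y → G.Adj z w →
      Plus G a b x → Plus G b a y → Plus G a b z → Plus G b a w →
      G.dist y w = k → G.dist x z = k + 2 → False := by
  classical
  have hconn := hG.1
  have tri : ∀ u v w : V, G.dist u w ≤ G.dist u v + G.dist v w :=
    fun u v w => hconn.dist_triangle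
  have sym : ∀ u v : V, G.dist u v = G.dist v u := fun u v => SimpleGraph.dist_comm ..
  have ad : ∀ {u v : V}, G.Adj u v → G.dist u v = 1 := fun h => dist_eq_one_iff_adj.mpr h
  intro k
  induction k using Nat.strong_induction_on with
  | _ k ihk =>
  intro hkn a b x y z w hab hxy hzw hx hy hz hw hyw hxz
  rcases Nat.eq_zero_or_pos k with hk0 | hkpos
  · subst hk0
    have hyw' : y = w := hconn.dist_eq_zero_iff.mp hyw
    subst hyw'
    exact Q0 hG hab hxy hzw hx hy hz hxz
  obtain ⟨g0, hg00, hg0k, hg0adj, hg0dist⟩ := geodesic_fun hconn hyw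
  have key : ∀ Φ : ℕ, ∀ g : ℕ → V, g 0 = y → g k = w →
      (∀ j, j < k → G.Adj (g j) (g (j+1))) →
      (∀ j, j ≤ k → G.dist y (g j) = j ∧ G.dist (g j) w = k - j) →
      (∑ j ∈ Finset.range (k+1), G.dist a (g j)) = Φ → False := by
    intro Φ
    induction Φ using Nat.strong_induction_on with
    | _ Φ ihΦ =>
    intro g hg0 hgk hgadj hgdist hsum
    -- every vertex of the geodesic is on the b-side
    have hminus : ∀ j, j ≤ k → Plus G b a (g j) := by
      intro j hj
      have h1 := (hgdist j hj).1
      have h2 := (hgdist j hj).2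
      exact IH k (by omega) b a y w (g j) hab.symm hy hw hyw (by omega)
    obtain ⟨e1, e2, e3⟩ := cross_dists hG hab hxy hx hy
    obtain ⟨f1, f2, f3⟩ := cross_dists hG hab hzw hz hw
    have hadj01 : G.Adj y (g 1) := by
      have h := hgadj 0 hkpos; rwa [hg0] at h
    have hadjk : G.Adj (g (k-1)) w := by
      have h := hgadj (k-1) (by omega)
      rwa [show k - 1 + 1 = k from by omega, hgk] at h
    have hg1m : Plus G b a (g 1) := hminus 1 hkpos
    have hgk1m : Plus G b a (g (k-1)) := hminus (k-1) (by omega)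
    -- case analysis on the behaviour of d(a, ·) at the two ends
    by_cases hA : G.dist a (g 1) + 1 = G.dist a y
    · -- quadrangle below y
      have hxne : x ≠ g 1 := by
        intro h; rw [← h] at hg1m; exact plus_not_both hx hg1m
      have hax : G.dist a x = G.dist a (g 1) := by
        have c1 := sym a x; have c2 := sym a y
        unfold Plus at hx hy; omega
      have hnadj : ¬ G.Adj x (g 1) := not_adj_far hG (p := a) (by omega) (by omega)
      have hx12 : G.dist x (g 1) = 2 := dist_eq_two hconn hxne hnadj hxy hadj01
      obtain ⟨s, hxs, hg1s, hs⟩ :=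
        qc hG (u := a) (k := G.dist a x) hx12 rfl (by omega)
      have hsplus : Plus G a b s := by
        have h1 := grad hG hab s
        have h2 := grad hG hxs b
        have c1 := sym b x; have c2 := sym b s; have c3 := sym a s; have c4 := sym a x
        unfold Plus at h1 h2 hx hy ⊢
        omega
      have hg1w : G.dist (g 1) w = k - 1 := (hgdist 1 hkpos).2
      have hsz : G.dist s z = k + 1 := by
        have t1 := tri x s z
        have t2 := tri s (g 1) z
        have t3 := tri (g 1) w z
        have d1 := ad hxs
        have d2 : G.dist s (g 1) = 1 := by rw [sym]; exact ad hg1s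
        have d3 : G.dist w z = 1 := by rw [sym]; exact ad hzw
        omega
      exact ihk (k-1) (by omega) (by omega) a b s (g 1) z w hab hg1s.symm hzw
        hsplus hg1m hz hw (by omega) (by omega)
    by_cases hB : G.dist a (g (k-1)) + 1 = G.dist a w
    · -- quadrangle below w
      have hzne : z ≠ g (k-1) := by
        intro h; rw [← h] at hgk1m; exact plus_not_both hz hgk1m
      have haz : G.dist a z = G.dist a (g (k-1)) := by
        have c1 := sym a z; have c2 := sym a w
        unfold Plus at hz hw; omega
      have hnadj : ¬ G.Adj z (g (k-1)) := not_adj_far hG (p := a) (by omega) (by omega)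
      have hz12 : G.dist z (g (k-1)) = 2 :=
        dist_eq_two hconn hzne hnadj hzw hadjk.symm
      obtain ⟨s, hzs, hgk1s, hs⟩ :=
        qc hG (u := a) (k := G.dist a z) hz12 rfl (by omega)
      have hsplus : Plus G a b s := by
        have h1 := grad hG hab s
        have h2 := grad hG hzs b
        have c1 := sym b z; have c2 := sym b s; have c3 := sym a s; have c4 := sym a z
        unfold Plus at h1 h2 hz hw ⊢
        omega
      have hyg : G.dist y (g (k-1)) = k - 1 := (hgdist (k-1) (by omega)).1
      have hxs : G.dist x s = k + 1 := by
        have t1 := tri x z s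
        have t2 := tri x y s
        have t3 := tri y (g (k-1)) s
        have d1 := ad hzs
        have d2 : G.dist (g (k-1)) s = 1 := ad hgk1s
        have d3 := ad hxy
        have t4 := tri x s z
        have c5 := sym z s
        omega
      exact ihk (k-1) (by omega) (by omega) a b x y s (g (k-1)) hab hxy hgk1s.symm
        hx hy hsplus hgk1m (by omega) (by omega)
    -- both ends ascend: find an interior local maximum
    push_neg at hA hB
    have hA' : G.dist a y + 1 = G.dist a (g 1) := by
      have h := grad hG hadj01 a
      unfold Plus at h; omega
    have hB' : G.dist a w + 1 = G.dist a (g (k-1)) := by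
      have h := grad hG hadjk a
      unfold Plus at h; omega
    have hk2 : 2 ≤ k := by
      by_contra hlt
      have hk1 : k = 1 := by omega
      subst hk1
      simp only [show (1:ℕ) - 1 = 0 from rfl, hg0] at hB'
      rw [hgk] at hA'
      omega
    obtain ⟨i, hige1, hilek, hPi, hmax⟩ :
        ∃ i, 1 ≤ i ∧ i ≤ k - 1 ∧ (G.dist a (g (i-1)) + 1 = G.dist a (g i)) ∧
          ∀ j, i < j → j ≤ k - 1 → ¬ (G.dist a (g (j-1)) + 1 = G.dist a (g j)) := by
      classical
      set P : ℕ → Prop := fun i => G.dist a (g (i-1)) + 1 = G.dist a (g i) with hPdef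
      have hP1 : P 1 := by
        show G.dist a (g 0) + 1 = G.dist a (g 1)
        rw [hg0]; exact hA'
      exact ⟨Nat.findGreatest P (k-1), Nat.le_findGreatest (by omega) hP1,
        Nat.findGreatest_le _, Nat.findGreatest_spec (by omega) hP1,
        fun j h1 h2 hPj => Nat.findGreatest_is_greatest h1 h2 hPj⟩
    have hadjl : G.Adj (g (i-1)) (g i) := by
      have h := hgadj (i-1) (by omega)
      rwa [show i - 1 + 1 = i from by omega] at h
    have hadjr : G.Adj (g i) (g (i+1)) := hgadj i (by omega)
    have hdesc : G.dist a (g (i+1)) + 1 = G.dist a (g i) := by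
      have h := grad hG hadjr a
      unfold Plus at h
      have c1 := sym a (g i); have c2 := sym a (g (i+1))
      rcases h with h | h
      · exfalso
        by_cases hik : i + 1 ≤ k - 1
        · refine hmax (i+1) (by omega) hik ?_
          rw [show i + 1 - 1 = i from rfl]
          omega
        · have hik' : i = k - 1 := by omega
          rw [hik', show k - 1 + 1 = k from by omega, hgk] at h
          rw [hik'] at hPi
          have c3 := sym a w
          omega
      · omega
    -- quadrangle at the local maximum
    have hne2 : g (i-1) ≠ g (i+1) := by
      intro h
      have d1 := (hgdist (i-1) (by omega)).1
      have d2 := (hgdist (i+1) (by omega)).1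
      rw [h] at d1; omega
    have hnadj2 : ¬ G.Adj (g (i-1)) (g (i+1)) := by
      refine not_adj_far hG (p := y) ?_ ?_ <;>
      · have d1 := (hgdist (i-1) (by omega)).1
        have d2 := (hgdist (i+1) (by omega)).1
        omega
    have hd2 : G.dist (g (i-1)) (g (i+1)) = 2 := dist_eq_two hconn hne2 hnadj2 hadjl hadjr
    have heqa : G.dist a (g (i+1)) = G.dist a (g (i-1)) := by omega
    obtain ⟨s, hls, hrs, hs⟩ :=
      qc hG (u := a) (k := G.dist a (g (i-1))) hd2 rfl heqa
    rcases grad hG hab s with hsplus | hsminus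
    · -- s is on the a-side: at least one of the two new crossing edges gives a
      -- smaller bad pair, or the triangle inequality fails
      by_cases hdx : G.dist x s = i + 1
      · exact ihk (i-1) (by omega) (by omega) a b x y s (g (i-1)) hab hxy hls.symm
          hx hy hsplus (hminus (i-1) (by omega))
          (by have := (hgdist (i-1) (by omega)).1; omega) (by omega)
      by_cases hdz : G.dist s z = k - i + 1
      · refine ihk (k-i-1) (by omega) (by omega) a b s (g (i+1)) z w hab hrs.symm hzw
          hsplus (hminus (i+1) (by omega)) hz hw
          (by have := (hgdist (i+1) (by omega)).2; omega) (by omega)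
      · -- both distances are small : triangle inequality is violated
        have t1 := tri x y s
        have t2 := tri y (g (i-1)) s
        have t3 := tri s (g (i+1)) z
        have t4 := tri (g (i+1)) w z
        have t5 := tri x s z
        have d1 := ad hxy
        have d2 : G.dist (g (i-1)) s = 1 := ad hls
        have d3 : G.dist s (g (i+1)) = 1 := by rw [sym]; exact ad hrs
        have d4 : G.dist w z = 1 := by rw [sym]; exact ad hzw
        have d5 := (hgdist (i-1) (by omega)).1
        have d6 := (hgdist (i+1) (by omega)).2
        omega
    · -- s is on the b-side: push the geodesic down
      set g' : ℕ → V := Function.update g i s with hg'def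
      have hg'i : g' i = s := Function.update_self i s g
      have hg'ne : ∀ j, j ≠ i → g' j = g j := fun j hj => Function.update_of_ne hj s g
      have hyi : G.dist y s = i := by
        have t1 := tri y (g (i-1)) s
        have t2 := tri y s (g (i+1))
        have d1 := (hgdist (i-1) (by omega)).1
        have d2 := (hgdist (i+1) (by omega)).1
        have d3 : G.dist (g (i-1)) s = 1 := ad hls
        have d4 : G.dist s (g (i+1)) = 1 := by rw [sym]; exact ad hrs
        omega
      have hsw : G.dist s w = k - i := by
        have t1 := tri (g (i-1)) s w
        have t2 := tri s (g (i+1)) w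
        have d1 := (hgdist (i-1) (by omega)).2
        have d2 := (hgdist (i+1) (by omega)).2
        have d3 : G.dist (g (i-1)) s = 1 := ad hls
        have d4 : G.dist s (g (i+1)) = 1 := by rw [sym]; exact ad hrs
        omega
      have hmem : i ∈ Finset.range (k+1) := Finset.mem_range.mpr (by omega)
      have hsum1 := Finset.sum_eq_sum_sdiff_singleton_add hmem (fun j => G.dist a (g j))
      have hsum2 := Finset.sum_eq_sum_sdiff_singleton_add hmem (fun j => G.dist a (g' j))
      have hsume : ∑ j ∈ Finset.range (k+1) \ {i}, G.dist a (g' j)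
          = ∑ j ∈ Finset.range (k+1) \ {i}, G.dist a (g j) := by
        refine Finset.sum_congr rfl fun j hj => ?_
        rw [hg'ne j (by simp at hj; exact hj.2)]
      have hsa : G.dist a s + 2 = G.dist a (g i) := by omega
      refine ihΦ (Φ - 2) (by
          have hle : G.dist a (g i) ≤ ∑ j ∈ Finset.range (k+1), G.dist a (g j) :=
            Finset.single_le_sum (f := fun j => G.dist a (g j)) (fun _ _ => Nat.zero_le _) hmem
          omega) g' ?_ ?_ ?_ ?_ ?_
      · rw [hg'ne 0 (by omega)]; exact hg0
      · rw [hg'ne k (by omega)]; exact hgk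
      · intro j hj
        by_cases hj1 : j = i - 1
        · rw [hj1, hg'ne (i-1) (by omega), show i - 1 + 1 = i from by omega, hg'i]
          exact hls
        by_cases hj2 : j = i
        · rw [hj2, hg'i, hg'ne (i+1) (by omega)]
          exact hrs.symm
        · rw [hg'ne j (by omega), hg'ne (j+1) (by omega)]
          exact hgadj j hj
      · intro j hj
        by_cases hj2 : j = i
        · rw [hj2, hg'i]
          rw [hj2] at hj
          exact ⟨hyi, by omega⟩
        · rw [hg'ne j hj2]
          exact hgdist j hj
      · rw [hsum2, hsume, hg'i]
        omega

  exact key _ g0 hg00 hg0k hg0adj hg0dist rfl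


/-- Halfspaces are convex in a median graph. -/
theorem halfspace_convex (hG : IsMedianGraph G) : ∀ n : ℕ, ∀ a b x z y : V, G.Adj a b →
    Plus G a b x → Plus G a b z → G.dist x z = n → G.dist x y + G.dist y z = n →
    Plus G a b y := by
  have hconn := hG.1
  have tri : ∀ u v w : V, G.dist u w ≤ G.dist u v + G.dist v w :=
    fun u v w => hconn.dist_triangle
  have sym : ∀ u v : V, G.dist u v = G.dist v u := fun u v => SimpleGraph.dist_comm ..
  have ad : ∀ {u v : V}, G.Adj u v → G.dist u v = 1 := fun h => dist_eq_one_iff_adj.mpr h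
  intro n
  induction n using Nat.strong_induction_on with
  | _ n IH =>
  intro a b x z y hab hx hz hxz hy
  rcases grad hG hab y with hplus | hminus
  · exact hplus
  exfalso
  have slide : ∀ k, ∀ y' : V, G.dist x y' = k → Plus G b a y' →
      G.dist x y' + G.dist y' z = n → False := by
    intro k
    induction k using Nat.strong_induction_on with
    | _ k ihk =>
    intro y' hk hmin hiv
    rcases Nat.eq_zero_or_pos k with h0 | hpos
    · subst h0
      have hxy' : x = y' := hconn.dist_eq_zero_iff.mp hk
      rw [← hxy'] at hmin
      exact plus_not_both hx hmin
    rcases Nat.lt_or_ge 1 k with hk2 | hk1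
    · -- k ≥ 2 : slide one step towards x
      obtain ⟨u, hyu, hux⟩ := step hconn (x := y') (z := x) (n := k - 1)
        (by rw [sym]; omega)
      have hd1 : G.dist u y' = 1 := by rw [sym]; exact ad hyu
      have huz : G.dist u z = G.dist y' z + 1 := by
        have t1 := tri u y' z
        have t2 := tri x u z
        have c1 := sym u x
        omega
      rcases grad hG hab u with hup | hum
      · have : Plus G a b y' :=
          IH (G.dist u z) (by have c1 := sym u x; omega) a b u z y' hab hup hz rfl
            (by omega)
        exact plus_not_both this hmin
      · exact ihk (k-1) (by omega) u (by rw [sym]; omega) hum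
          (by have c1 := sym u x; omega)
    · -- k = 1 : y' is adjacent to x
      have hk1' : k = 1 := by omega
      subst hk1'
      have hadjxy : G.Adj x y' := dist_eq_one_iff_adj.mp hk
      rcases Nat.eq_zero_or_pos (G.dist y' z) with hz0 | hzpos
      · have : y' = z := hconn.dist_eq_zero_iff.mp hz0
        rw [this] at hmin
        exact plus_not_both hz hmin
      · -- take the neighbour of z on a geodesic towards y'
        obtain ⟨w, hzw, hw⟩ := step hconn (x := z) (z := y') (n := n - 2)
          (by rw [sym]; omega)
        have hdzw : G.dist z w = 1 := ad hzw
        rcases grad hG hab w with hwp | hwm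
        · have hxw : G.dist x w = n - 1 := by
            have t1 := tri x y' w
            have t2 := tri x w z
            have c1 := sym w y'
            have c2 := sym w z
            omega
          have : Plus G a b y' := IH (n-1) (by omega) a b x w y' hab hx hwp hxw
            (by have c1 := sym w y'; omega)
          exact plus_not_both this hmin
        · exact Qstep hG n IH (n-2) (by omega) a b x y' z w hab hadjxy hzw
            hx hmin hz hwm (by rw [sym]; omega) (by omega)
  exact slide (G.dist x y) y rfl hminus hy


/-- vertices on the `a`-side are strictly closer to the plus end of any crossing edge -/
lemma Dlem (hG : IsMedianGraph G) {a b x y w : V} (hab : G.Adj a b) (hxy : G.Adj x y)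
    (hx : Plus G a b x) (hy : Plus G b a y) (hw : Plus G a b w) :
    G.dist w y = G.dist w x + 1 := by
  rcases grad hG hxy w with h | h
  · unfold Plus at h; omega
  · exfalso
    have had : G.dist y x = 1 := by rw [SimpleGraph.dist_comm]; exact dist_eq_one_iff_adj.mpr hxy
    have hyI : G.dist w y + G.dist y x = G.dist w x := by unfold Plus at h; omega
    exact plus_not_both (halfspace_convex hG (G.dist w x) a b w x y hab hw hx rfl hyI) hy

/-- `v` is in the carrier of the wall dual to the edge `(a, b)` -/
def CarrierMem (G : SimpleGraph V) (a b v : V) : Prop :=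
  ∃ u, G.Adj v u ∧ ((Plus G a b v ∧ Plus G b a u) ∨ (Plus G b a v ∧ Plus G a b u))

lemma CarrierMem.swap {a b v : V} (h : CarrierMem G a b v) : CarrierMem G b a v := by
  obtain ⟨u, hu, h | h⟩ := h
  · exact ⟨u, hu, Or.inr h⟩
  · exact ⟨u, hu, Or.inl h⟩

/-- convexity of the carrier, part 1: both endpoints on the `a`-side -/
lemma Ua_convex (hG : IsMedianGraph G) {a b x z x' z' y : V} (hab : G.Adj a b)
    (hx : Plus G a b x) (hz : Plus G a b z)
    (hxx' : G.Adj x x') (hx' : Plus G b a x') (hzz' : G.Adj z z') (hz' : Plus G b a z')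
    (hy : G.dist x y + G.dist y z = G.dist x z) : CarrierMem G a b y := by
  have hconn := hG.1
  have tri : ∀ u v w : V, G.dist u w ≤ G.dist u v + G.dist v w :=
    fun u v w => hconn.dist_triangle
  have sym : ∀ u v : V, G.dist u v = G.dist v u := fun u v => SimpleGraph.dist_comm ..
  rcases Nat.eq_zero_or_pos (G.dist x y) with h0 | hxpos
  · have h : x = y := hconn.dist_eq_zero_iff.mp h0
    subst h; exact ⟨x', hxx', Or.inl ⟨hx, hx'⟩⟩
  rcases Nat.eq_zero_or_pos (G.dist y z) with h0 | hzpos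
  · have h : y = z := hconn.dist_eq_zero_iff.mp h0
    subst h; exact ⟨z', hzz', Or.inl ⟨hz, hz'⟩⟩
  have hyp : Plus G a b y := halfspace_convex hG (G.dist x z) a b x z y hab hx hz rfl hy
  have dyx' : G.dist y x' = G.dist y x + 1 := Dlem hG hab hxx' hx hx' hyp
  have dyz' : G.dist y z' = G.dist y z + 1 := Dlem hG hab hzz' hz hz' hyp
  have dxz' : G.dist x z' = G.dist x z + 1 := Dlem hG hab hzz' hz hz' hx
  have dx'z : G.dist x' z = G.dist x' z' + 1 := Dlem hG hab.symm hzz'.symm hz' hz hx'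
  have dx'z' : G.dist x' z' = G.dist x z := by
    have t1 := tri x' x z
    have t2 := tri x x' z'
    have d1 : G.dist x' x = 1 := by rw [SimpleGraph.dist_comm]; exact dist_eq_one_iff_adj.mpr hxx'
    have c1 := sym x x'
    omega
  obtain ⟨mu, ⟨m1, m2, m3⟩, -⟩ := hG.2 x' y z'
  have cymu := sym y mu
  have cyx' := sym y x'
  have cyz' := sym y z'
  have cyx := sym y x
  have hmuy : G.dist y mu = 1 := by omega
  have hadjymu : G.Adj y mu := dist_eq_one_iff_adj.mp hmuy
  rcases grad hG hab mu with hmup | hmum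
  · exfalso
    have dmux' : G.dist mu x' = G.dist x' mu := sym ..
    have h1 : G.dist mu x' = G.dist x y := by omega
    have h2 : G.dist mu x' = G.dist mu x + 1 := Dlem hG hab hxx' hx hx' hmup
    have h3 : G.dist mu z' = G.dist y z := by have := sym mu z'; omega
    have h4 : G.dist mu z' = G.dist mu z + 1 := Dlem hG hab hzz' hz hz' hmup
    have t1 := tri x mu z
    have c1 := sym x mu
    omega
  · exact ⟨mu, hadjymu, Or.inl ⟨hyp, hmum⟩⟩

/-- convexity of the carrier, part 2: endpoints on opposite sides -/
lemma carrier_mixed (hG : IsMedianGraph G) {a b x z x' z' y : V} (hab : G.Adj a b)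
    (hx : Plus G a b x) (hxx' : G.Adj x x') (hx' : Plus G b a x')
    (hz : Plus G b a z) (hzz' : G.Adj z z') (hz' : Plus G a b z')
    (hy : G.dist x y + G.dist y z = G.dist x z) : CarrierMem G a b y := by
  have hconn := hG.1
  have sym : ∀ u v : V, G.dist u v = G.dist v u := fun u v => SimpleGraph.dist_comm ..
  rcases Nat.eq_zero_or_pos (G.dist x y) with h0 | hxpos
  · have h : x = y := hconn.dist_eq_zero_iff.mp h0
    subst h; exact ⟨x', hxx', Or.inl ⟨hx, hx'⟩⟩
  rcases Nat.eq_zero_or_pos (G.dist y z) with h0 | hzpos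
  · have h : y = z := hconn.dist_eq_zero_iff.mp h0
    subst h; exact ⟨z', hzz', Or.inr ⟨hz, hz'⟩⟩
  rcases grad hG hab y with hyp | hym
  · -- y on the a-side: shift the far end to z'
    have dyz : G.dist y z = G.dist y z' + 1 := Dlem hG hab hzz'.symm hz' hz hyp
    have dxz : G.dist x z = G.dist x z' + 1 := Dlem hG hab hzz'.symm hz' hz hx
    exact Ua_convex hG hab hx hz' hxx' hx' hzz'.symm hz (by omega)
  · -- y on the b-side: shift the near end to x'
    have dyx : G.dist y x = G.dist y x' + 1 := Dlem hG hab.symm hxx'.symm hx' hx hym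
    have dzx : G.dist z x = G.dist z x' + 1 := Dlem hG hab.symm hxx'.symm hx' hx hz
    have hI : G.dist x' y + G.dist y z = G.dist x' z := by
      have c1 := sym x y; have c2 := sym x' y
      have c3 := sym x z; have c4 := sym x' z
      omega
    exact (Ua_convex hG hab.symm hx' hz hxx'.symm hx hzz' hz' hI).swap

/-- the carrier of a wall is convex -/
lemma carrier_convex (hG : IsMedianGraph G) {a b x z y : V} (hab : G.Adj a b)
    (hx : CarrierMem G a b x) (hz : CarrierMem G a b z)
    (hy : G.dist x y + G.dist y z = G.dist x z) : CarrierMem G a b y := by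
  have sym : ∀ u v : V, G.dist u v = G.dist v u := fun u v => SimpleGraph.dist_comm ..
  obtain ⟨u, hu, hcx⟩ := hx
  obtain ⟨w, hw, hcz⟩ := hz
  rcases hcx with ⟨hx1, hx2⟩ | ⟨hx1, hx2⟩ <;> rcases hcz with ⟨hz1, hz2⟩ | ⟨hz1, hz2⟩
  · exact Ua_convex hG hab hx1 hz1 hu hx2 hw hz2 hy
  · exact carrier_mixed hG hab hx1 hu hx2 hz1 hw hz2 hy
  · have hI : G.dist z y + G.dist y x = G.dist z x := by
      have c1 := sym x y; have c2 := sym x z; have c3 := sym y z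
      omega
    exact carrier_mixed hG hab hz1 hw hz2 hx1 hu hx2 hI
  · exact (Ua_convex hG hab.symm hx1 hz1 hu hx2 hw hz2 hy).swap


/-- geodesic convexity of a vertex set -/
def Conv (G : SimpleGraph V) (S : Set V) : Prop :=
  ∀ x ∈ S, ∀ z ∈ S, ∀ y, G.dist x y + G.dist y z = G.dist x z → y ∈ S

lemma Conv.inter {A B : Set V} (hA : Conv G A) (hB : Conv G B) : Conv G (A ∩ B) :=
  fun x hx z hz y hy => ⟨hA x hx.1 z hz.1 y hy, hB x hx.2 z hz.2 y hy⟩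

lemma triple_helly (hG : IsMedianGraph G) {A B C : Set V} (hA : Conv G A) (hB : Conv G B)
    (hC : Conv G C) (hab : (A ∩ B).Nonempty) (hbc : (B ∩ C).Nonempty)
    (hac : (A ∩ C).Nonempty) : (A ∩ B ∩ C).Nonempty := by
  obtain ⟨p, hpA, hpB⟩ := hab
  obtain ⟨q, hqB, hqC⟩ := hbc
  obtain ⟨r, hrA, hrC⟩ := hac
  obtain ⟨m, ⟨m1, m2, m3⟩, -⟩ := hG.2 p q r
  exact ⟨m, ⟨hA p hpA r hrA m m2, hB p hpB q hqB m m1⟩, hC q hqC r hrC m m3⟩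

/-- Helly property for finlocated families of convex sets -/
lemma helly (hG : IsMedianGraph G) {ι : Type*} (s : Finset ι) (f : ι → Set V)
    (hconv : ∀ i ∈ s, Conv G (f i))
    (hpair : ∀ i ∈ s, ∀ j ∈ s, (f i ∩ f j).Nonempty) :
    ∃ v, ∀ i ∈ s, v ∈ f i := by
  classical
  have hne : Nonempty V := hG.1.nonempty
  induction s using Finset.induction_on generalizing f with
  | empty => exact ⟨Classical.arbitrary V, by simp⟩
  | @insert a s ha ih =>
    rcases s.eq_empty_or_nonempty with rfl | ⟨i0, hi0⟩
    · obtain ⟨v, hv, -⟩ := hpair a (Finset.mem_insert_self a _) a (Finset.mem_insert_self a _)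
      refine ⟨v, fun i hi => ?_⟩
      rcases Finset.mem_insert.mp hi with rfl | h
      · exact hv
      · simp at h
    · obtain ⟨v, hv⟩ := ih (fun i => f i ∩ f a)
        (fun i hi => Conv.inter (hconv i (Finset.mem_insert_of_mem hi))
          (hconv a (Finset.mem_insert_self a _)))
        (fun i hi j hj => by
          have h3 := triple_helly hG (hconv i (Finset.mem_insert_of_mem hi))
            (hconv j (Finset.mem_insert_of_mem hj)) (hconv a (Finset.mem_insert_self a _))
            (hpair i (Finset.mem_insert_of_mem hi) j (Finset.mem_insert_of_mem hj))
            (hpair j (Finset.mem_insert_of_mem hj) a (Finset.mem_insert_self a _))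
            (hpair i (Finset.mem_insert_of_mem hi) a (Finset.mem_insert_self a _))
          obtain ⟨m, ⟨hmi, hmj⟩, hma⟩ := h3
          exact ⟨m, ⟨hmi, hma⟩, hmj, hma⟩)
      refine ⟨v, fun i hi => ?_⟩
      rcases Finset.mem_insert.mp hi with rfl | h
      · exact (hv i0 hi0).2
      · exact (hv i h).1


/-- characterisation of the Djokovic-Winkler relation via wall sides -/
lemma theta_iff (hG : IsMedianGraph G) {e f : V × V} (he : G.Adj e.1 e.2)
    (hf : G.Adj f.1 f.2) :
    Theta G e f ↔ ((Plus G e.1 e.2 f.1 ∧ Plus G e.2 e.1 f.2) ∨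
      (Plus G e.2 e.1 f.1 ∧ Plus G e.1 e.2 f.2)) := by
  have h1 := grad hG he f.1
  have h2 := grad hG he f.2
  have c1 : G.dist e.1 f.1 = G.dist f.1 e.1 := SimpleGraph.dist_comm ..
  have c2 : G.dist e.1 f.2 = G.dist f.2 e.1 := SimpleGraph.dist_comm ..
  have c3 : G.dist e.2 f.1 = G.dist f.1 e.2 := SimpleGraph.dist_comm ..
  have c4 : G.dist e.2 f.2 = G.dist f.2 e.2 := SimpleGraph.dist_comm ..
  unfold Theta Plus at *
  omega

/-- membership in the carrier of a hyperplane -/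
lemma adjTo_iff (hG : IsMedianGraph G) {e : V × V} (he : G.Adj e.1 e.2) (v : V) :
    AdjTo G {f | G.Adj f.1 f.2 ∧ Theta G e f} v ↔ CarrierMem G e.1 e.2 v := by
  constructor
  · rintro ⟨f, ⟨hf, hθ⟩, hor⟩
    have hchar := (theta_iff hG he hf).mp hθ
    rcases hor with h1 | h2
    · subst h1
      rcases hchar with ⟨hp, hq⟩ | ⟨hp, hq⟩
      · exact ⟨f.2, hf, Or.inl ⟨hp, hq⟩⟩
      · exact ⟨f.2, hf, Or.inr ⟨hp, hq⟩⟩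
    · subst h2
      rcases hchar with ⟨hp, hq⟩ | ⟨hp, hq⟩
      · exact ⟨f.1, hf.symm, Or.inr ⟨hq, hp⟩⟩
      · exact ⟨f.1, hf.symm, Or.inl ⟨hq, hp⟩⟩
  · rintro ⟨u, hu, hor⟩
    refine ⟨(v, u), ⟨hu, (theta_iff hG he hu).mpr ?_⟩, Or.inl rfl⟩
    rcases hor with h | h
    · exact Or.inl h
    · exact Or.inr h

lemma theta_self {e : V × V} (hconn : G.Connected) (he : G.Adj e.1 e.2) : Theta G e e := by
  unfold Theta
  have h1 : G.dist e.1 e.1 = 0 := hconn.dist_eq_zero_iff.mpr rfl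
  have h2 : G.dist e.2 e.2 = 0 := hconn.dist_eq_zero_iff.mpr rfl
  have h3 : G.dist e.1 e.2 = 1 := dist_eq_one_iff_adj.mpr he
  have h4 : G.dist e.2 e.1 = 1 := dist_eq_one_iff_adj.mpr he.symm
  omega


end CH

theorem finite_clique_in_Wv' (G : SimpleGraph V) (hG : IsMedianGraph G)
    (C : Set (Set (V × V))) (hfin : C.Finite) (hC : IsContactClique G C) :
    ∃ v : V, ∀ h ∈ C, AdjTo G h v := by
  classical
  have hconn := hG.1
  obtain ⟨v, hv⟩ := CH.helly hG hfin.toFinset (fun h => {v | AdjTo G h v})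
    (by
      intro h hh
      obtain ⟨e, he, rfl⟩ := hC.1 h (hfin.mem_toFinset.mp hh)
      intro x hx z hz y hy
      have hx' := (CH.adjTo_iff hG he x).mp hx
      have hz' := (CH.adjTo_iff hG he z).mp hz
      exact (CH.adjTo_iff hG he y).mpr (CH.carrier_convex hG he hx' hz' hy))
    (by
      intro i hi j hj
      by_cases hij : i = j
      · subst hij
        obtain ⟨e, he, rfl⟩ := hC.1 i (hfin.mem_toFinset.mp hi)
        exact ⟨e.1, ⟨e, ⟨he, CH.theta_self hconn he⟩, Or.inl rfl⟩,
          ⟨e, ⟨he, CH.theta_self hconn he⟩, Or.inl rfl⟩⟩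
      · obtain ⟨v, hvi, hvj⟩ := hC.2 i (hfin.mem_toFinset.mp hi) j (hfin.mem_toFinset.mp hj) hij
        exact ⟨v, hvi, hvj⟩)
  exact ⟨v, fun h hh => hv h (hfin.mem_toFinset.mpr hh)⟩

/-- every finite clique in the contact graph of a CAT(0) cube complex is
contained in `Wv G v` for some vertex `v`. -/
theorem finite_clique_in_Wv (G : SimpleGraph V) (hG : IsMedianGraph G)
    (C : Set (Set (V × V))) (hfin : C.Finite) (hC : IsContactClique G C) :
    ∃ v : V, ∀ h ∈ C, AdjTo G h v :=
  finite_clique_in_Wv' G hG C hfin hC
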